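/- Let M be a finite von Neumann algebra with faithful normal trace τ, N ⊆ M a von Neumann subalgebra with τ-preserving conditional expectation E_N, and φ : M → M a normal completely positive N-bimodular map with φ(1) ≤ 1 − ε for some ε > 0 and τ∘φ ≤ τ. Put h = φ(1) and k = dτ∘φ/dτ. Then there exist positive operators a, b ∈ N′ ∩ M such that 1 − h = a·E_N(b) and 1 − k = E_N(a)·b. -/

import Mathlib

/- Common framework: a finite von Neumann algebra `M` on a Hilbert space `H` with a faithful
normal trace, normal completely positive maps, bimodular maps, and the `2`-norm. -/

open scoped ComplexOrder InnerProductSpace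
open Filter Topology

noncomputable section

universe u

variable (H : Type u) [NormedAddCommGroup H] [InnerProductSpace ℂ H] [CompleteSpace H]

/-- The `2`-norm `‖x‖₂ = τ(x*x)^{1/2}` associated to a trace functional `τ`. -/
def twoNorm (τ : (H →L[ℂ] H) →ₗ[ℂ] ℂ) (x : H →L[ℂ] H) : ℝ :=
  Real.sqrt (τ (star x * x)).re

/-- A linear functional on `B(H)` is normal (relative to the von Neumann algebra `M`) if it is
continuous for the weak operator topology on bounded balls of `M`. -/
def IsNormalFunctional (M : VonNeumannAlgebra H) (τ : (H →L[ℂ] H) →ₗ[ℂ] ℂ) : Prop :=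
  ∀ r : ℝ, ContinuousOn
    (fun T : H →WOT[ℂ] H => τ (ContinuousLinearMapWOT.toCLM T))
    (ContinuousLinearMapWOT.ofCLM '' (Metric.closedBall 0 r ∩ (M : Set (H →L[ℂ] H))))

/-- A faithful normal tracial state on a von Neumann algebra `M ⊆ B(H)`. -/
structure FaithfulNormalTrace (M : VonNeumannAlgebra H) where
  τ : (H →L[ℂ] H) →ₗ[ℂ] ℂ
  pos : ∀ x ∈ M, 0 ≤ τ (star x * x)
  faithful : ∀ x ∈ M, τ (star x * x) = 0 → x = 0
  tracial : ∀ x ∈ M, ∀ y ∈ M, τ (x * y) = τ (y * x)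
  unital : τ 1 = 1
  normal : IsNormalFunctional H M τ

/-- A linear map `φ : B(H) → B(H)` is normal (as a map of the von Neumann algebra `M`) if it is
continuous for the weak operator topology on bounded balls of `M`. -/
def IsNormalMap (M : VonNeumannAlgebra H) (φ : (H →L[ℂ] H) →ₗ[ℂ] (H →L[ℂ] H)) : Prop :=
  ∀ r : ℝ, ContinuousOn
    (fun T : H →WOT[ℂ] H =>
      ContinuousLinearMapWOT.ofCLM (φ (ContinuousLinearMapWOT.toCLM T)))
    (ContinuousLinearMapWOT.ofCLM '' (Metric.closedBall 0 r ∩ (M : Set (H →L[ℂ] H))))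

/-- Complete positivity of `φ` on `M`: for all `x₁, …, xₙ ∈ M` and `ξ₁, …, ξₙ ∈ H`,
`∑_{i,j} ⟨ξᵢ, φ(xᵢ* xⱼ) ξⱼ⟩ ≥ 0`. -/
def IsCompletelyPositive (M : VonNeumannAlgebra H)
    (φ : (H →L[ℂ] H) →ₗ[ℂ] (H →L[ℂ] H)) : Prop :=
  ∀ (n : ℕ) (x : Fin n → (H →L[ℂ] H)) (ξ : Fin n → H), (∀ i, x i ∈ M) →
    0 ≤ ∑ i, ∑ j, ⟪ξ i, φ (star (x i) * x j) (ξ j)⟫_ℂ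

/-- `φ` is a normal completely positive map from `M` to `M`. -/
def IsNormalCP (M : VonNeumannAlgebra H) (φ : (H →L[ℂ] H) →ₗ[ℂ] (H →L[ℂ] H)) : Prop :=
  (∀ x ∈ M, φ x ∈ M) ∧ IsNormalMap H M φ ∧ IsCompletelyPositive H M φ

/-- `N`-bimodularity of a map `φ : M → M`: `φ(axb) = aφ(x)b` for `a, b ∈ N`, `x ∈ M`. -/
def IsBimodular (M N : VonNeumannAlgebra H) (φ : (H →L[ℂ] H) →ₗ[ℂ] (H →L[ℂ] H)) : Prop :=
  ∀ a ∈ N, ∀ b ∈ N, ∀ x ∈ M, φ (a * x * b) = a * φ x * b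

lemma commute_cfc_aux {A : Type*} [TopologicalSpace A] [Ring A] [StarRing A]
    [Algebra ℝ A] [IsTopologicalRing A] [T2Space A]
    [ContinuousFunctionalCalculus ℝ A (IsSelfAdjoint : A → Prop)]
    {a y : A} (ha : IsSelfAdjoint a) (hy : Commute y a) (f : ℝ → ℝ) :
    Commute y (cfc f a) := by
  by_cases hf : ContinuousOn f (spectrum ℝ a)
  · rw [cfc_apply f a ha hf]
    have hcs : CompactSpace (spectrum ℝ a) :=
      ContinuousFunctionalCalculus.compactSpace_spectrum (R := ℝ) a
    set s : Set ℝ := spectrum ℝ a with hs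
    let S : Subalgebra ℝ C(s, ℝ) :=
      { carrier := {g | Commute y (cfcHom ha g)}
        mul_mem' := fun hg1 hg2 => by
          simpa [map_mul] using Commute.mul_right hg1 hg2
        add_mem' := fun hg1 hg2 => by
          simpa [map_add] using Commute.add_right hg1 hg2
        algebraMap_mem' := fun r => by
          show Commute y (cfcHom ha (algebraMap ℝ C(s, ℝ) r))
          rw [AlgHomClass.commutes]
          exact Algebra.commute_algebraMap_right r y }
    have hSclosed : IsClosed (S : Set C(s, ℝ)) := by
      have hc : Continuous (cfcHom ha (R := ℝ)) :=
        cfcHom_continuous ha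
      exact isClosed_eq (by continuity) (by continuity)
    have hX : (Polynomial.toContinuousMapOnAlgHom s Polynomial.X) ∈ S := by
      have he : cfcHom ha (Polynomial.toContinuousMapOnAlgHom s Polynomial.X) = a := by
        have he2 : (Polynomial.toContinuousMapOnAlgHom s Polynomial.X)
            = (ContinuousMap.id ℝ).restrict s := by
          ext x; simp
        rw [he2, cfcHom_id ha]
      show Commute y _
      rw [he]; exact hy
    have htop : (⊤ : Subalgebra ℝ C(s, ℝ)) ≤ S := by
      rw [← polynomialFunctions.topologicalClosure s]
      apply Subalgebra.topologicalClosure_minimal _ hSclosed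
      rw [polynomialFunctions.eq_adjoin_X s]
      exact Algebra.adjoin_le (Set.singleton_subset_iff.mpr hX)
    exact htop (by trivial)
  · rw [cfc_apply_of_not_continuousOn a hf]
    exact Commute.zero_right y


set_option maxHeartbeats 1000000 in
/-- **Lemma 3.6.** Let `φ` be a normal completely positive `N`-bimodular map from `M` to `M`
with `φ(1) ≤ 1 − ε` for some `ε > 0` and `τ ∘ φ ≤ τ`. Put `h = φ(1)` and `k = dτ∘φ/dτ`. Then
there exist positive operators `a, b ∈ N' ∩ M` such that `1 − h = a·E_N(b)` and
`1 − k = E_N(a)·b`. -/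
theorem equation_lemma
    (M N : VonNeumannAlgebra H) (hNM : (N : Set (H →L[ℂ] H)) ⊆ (M : Set (H →L[ℂ] H)))
    (tr : FaithfulNormalTrace H M)
    -- the `τ`-preserving conditional expectation `E_N : M → N`
    (EN : (H →L[ℂ] H) →ₗ[ℂ] (H →L[ℂ] H))
    (hEN1 : ∀ x ∈ M, EN x ∈ N)
    (hEN2 : ∀ x ∈ N, EN x = x)
    (hEN3 : ∀ a ∈ N, ∀ b ∈ N, ∀ x ∈ M, EN (a * x * b) = a * EN x * b)
    (hEN4 : ∀ x ∈ M, tr.τ (EN x) = tr.τ x)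
    (hEN5 : ∀ x ∈ M, x.IsPositive → (EN x).IsPositive)
    (hEN6 : IsNormalMap H M EN)
    (φ : (H →L[ℂ] H) →ₗ[ℂ] (H →L[ℂ] H))
    (hφ : IsNormalCP H M φ) (hbi : IsBimodular H M N φ)
    -- `φ(1) ≤ 1 − ε`
    (ε : ℝ) (hε : 0 < ε) (hφ1 : ((1 - ε) • (1 : H →L[ℂ] H) - φ 1).IsPositive)
    (hsub : ∀ x ∈ M, x.IsPositive → tr.τ (φ x) ≤ tr.τ x)
    -- `h = φ(1)` and the Radon–Nikodym derivative `k = dτ∘φ/dτ`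
    (h k : H →L[ℂ] H) (hh : h = φ 1)
    (hkM : k ∈ M) (hkpos : k.IsPositive)
    (hkRN : ∀ x ∈ M, tr.τ (φ x) = tr.τ (x * k)) :
    ∃ a b : H →L[ℂ] H,
      a.IsPositive ∧ b.IsPositive ∧
      (a ∈ M ∧ ∀ y ∈ N, Commute y a) ∧
      (b ∈ M ∧ ∀ y ∈ N, Commute y b) ∧
      1 - h = a * EN b ∧ 1 - k = EN a * b := by
  classical
  have hM1 : (1 : H →L[ℂ] H) ∈ M := one_mem M
  have hN1 : (1 : H →L[ℂ] H) ∈ N := one_mem N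
  have hφM : ∀ x ∈ M, φ x ∈ M := hφ.1
  have hhM : h ∈ M := hh ▸ hφM 1 hM1
  -- faithfulness helpers
  have faith : ∀ d, d ∈ M → (∀ x ∈ M, tr.τ (x * d) = 0) → d = 0 := by
    intro d hd h0
    exact tr.faithful d hd (h0 (star d) (star_mem hd))
  have faith2 : ∀ u v, u ∈ M → v ∈ M → (∀ x ∈ M, tr.τ (x * u) = tr.τ (x * v)) → u = v := by
    intro u v hu hv he
    have hz : u - v = 0 := by
      apply faith _ (sub_mem hu hv)
      intro x hx
      rw [mul_sub, map_sub, he x hx, sub_self]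
    exact sub_eq_zero.mp hz
  -- h commutes with N
  have hhN : ∀ y ∈ N, Commute y h := by
    intro y hy
    have h1 : φ (y * 1 * 1) = y * φ 1 * 1 := hbi y hy 1 hN1 1 hM1
    have h2 : φ (1 * 1 * y) = 1 * φ 1 * y := hbi 1 hN1 y hy 1 hM1
    simp only [mul_one, one_mul] at h1 h2
    show y * h = h * y
    rw [hh, ← h1, ← h2]
  -- k commutes with N
  have hkN : ∀ y ∈ N, Commute y k := by
    intro y hy
    have hyM : y ∈ M := hNM hy
    have hz : y * k - k * y = 0 := by
      apply faith _ (sub_mem (mul_mem hyM hkM) (mul_mem hkM hyM))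
      intro x hx
      have e2 : φ (x * y) = φ x * y := by
        have := hbi 1 hN1 y hy x hx; simpa using this
      have e3 : φ (y * x) = y * φ x := by
        have := hbi y hy 1 hN1 x hx; simpa using this
      have key : tr.τ (x * (y * k)) = tr.τ (x * (k * y)) := by
        calc tr.τ (x * (y * k)) = tr.τ ((x * y) * k) := by rw [mul_assoc]
          _ = tr.τ (φ (x * y)) := (hkRN _ (mul_mem hx hyM)).symm
          _ = tr.τ (φ x * y) := by rw [e2]
          _ = tr.τ (y * φ x) := tr.tracial _ (hφM x hx) _ hyM
          _ = tr.τ (φ (y * x)) := by rw [e3]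
          _ = tr.τ ((y * x) * k) := hkRN _ (mul_mem hyM hx)
          _ = tr.τ (y * (x * k)) := by rw [mul_assoc]
          _ = tr.τ ((x * k) * y) := tr.tracial _ hyM _ (mul_mem hx hkM)
          _ = tr.τ (x * (k * y)) := by rw [mul_assoc]
      rw [mul_sub, map_sub, key, sub_self]
    exact sub_eq_zero.mp hz
  -- conditional expectation helpers
  have hEN_M : ∀ x ∈ M, EN x ∈ M := fun x hx => hNM (hEN1 x hx)
  have hENl : ∀ b ∈ N, ∀ x ∈ M, EN (x * b) = EN x * b := by
    intro b hb x hx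
    have := hEN3 1 hN1 b hb x hx; simpa using this
  have hENr : ∀ a ∈ N, ∀ x ∈ M, EN (a * x) = a * EN x := by
    intro a ha x hx
    have := hEN3 a ha 1 hN1 x hx; simpa using this
  have key : ∀ x ∈ M, ∀ d ∈ M, tr.τ (x * EN d) = tr.τ (EN x * d) := by
    intro x hx d hd
    have h1 : tr.τ (EN (x * EN d)) = tr.τ (x * EN d) := hEN4 _ (mul_mem hx (hEN_M d hd))
    have h2 : EN (x * EN d) = EN x * EN d := hENl (EN d) (hEN1 d hd) x hx
    have h3 : tr.τ (EN (EN x * d)) = tr.τ (EN x * d) := hEN4 _ (mul_mem (hEN_M x hx) hd)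
    have h4 : EN (EN x * d) = EN x * EN d := hENr (EN x) (hEN1 x hx) d hd
    rw [← h1, h2, ← h3, h4]
  -- τ(y h) = τ(y k) for y ∈ N
  have hyhk : ∀ y ∈ N, tr.τ (y * h) = tr.τ (y * k) := by
    intro y hy
    have hyM := hNM hy
    have e : φ y = y * h := by
      rw [hh]; have := hbi y hy 1 hN1 1 hM1; simpa using this
    rw [← e, hkRN y hyM]
  -- c = EN h = EN k
  set c : H →L[ℂ] H := EN h with hc
  have hcN : c ∈ N := hEN1 h hhM
  have hcM : c ∈ M := hNM hcN
  have hENk : EN k = c := by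
    apply faith2 _ _ (hEN_M k hkM) (hEN_M h hhM)
    intro x hx
    calc tr.τ (x * EN k) = tr.τ (EN x * k) := key x hx k hkM
      _ = tr.τ (EN x * h) := (hyhk (EN x) (hEN1 x hx)).symm
      _ = tr.τ (x * EN h) := (key x hx h hhM).symm
  -- c commutes with N
  have hcZ : ∀ y ∈ N, Commute y c := by
    intro y hy
    have e1 : EN (y * h * 1) = y * EN h * 1 := hEN3 y hy 1 hN1 h hhM
    have e2 : EN (1 * h * y) = 1 * EN h * y := hEN3 1 hN1 y hy h hhM
    have hcomm : y * h = h * y := hhN y hy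
    show y * c = c * y
    calc y * c = y * EN h * 1 := by rw [mul_one, hc]
      _ = EN (y * h * 1) := e1.symm
      _ = EN (1 * h * y) := by rw [mul_one, one_mul]; exact congrArg EN hcomm
      _ = 1 * EN h * y := e2
      _ = c * y := by rw [one_mul, hc]
  -- order facts
  have hε1 : (0 : H →L[ℂ] H) ≤ ε • 1 := by
    have : (Real.sqrt ε • (1 : H →L[ℂ] H)) * (Real.sqrt ε • 1) = ε • 1 := by
      rw [smul_mul_smul_comm, one_mul, Real.mul_self_sqrt hε.le]
    calc (0 : H →L[ℂ] H) ≤ star (Real.sqrt ε • (1 : H →L[ℂ] H)) * (Real.sqrt ε • 1) :=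
          star_mul_self_nonneg _
      _ = ε • 1 := by rw [star_smul, star_one, star_trivial, this]
  have hsm : (1 : H →L[ℂ] H) - (1 - ε) • 1 = ε • 1 := by
    rw [sub_smul, one_smul, sub_sub_cancel]
  have hφ1' : (0 : H →L[ℂ] H) ≤ (1 - ε) • 1 - h := by
    rw [ContinuousLinearMap.nonneg_iff_isPositive]
    rw [hh]; exact hφ1
  have h1h : ε • (1 : H →L[ℂ] H) ≤ 1 - h := by
    have := sub_le_sub_left (sub_nonneg.mp hφ1') (1 : H →L[ℂ] H)
    calc ε • (1 : H →L[ℂ] H) = 1 - (1 - ε) • 1 := hsm.symm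
      _ ≤ 1 - h := this
  have h1hpos : (0 : H →L[ℂ] H) ≤ 1 - h := le_trans hε1 h1h
  -- the element u = 1 - c
  have hsmem : ((1 - ε) • (1 : H →L[ℂ] H)) ∈ M := by
    have : ((1 - ε : ℝ)) • (1 : H →L[ℂ] H) = ((1 - ε : ℝ) : ℂ) • 1 := by
      rw [← Complex.coe_algebraMap, algebraMap_smul]
    rw [this]
    exact M.toStarSubalgebra.smul_mem hM1 _
  have hENsm : EN ((1 - ε) • (1 : H →L[ℂ] H) - h) = (1 - ε) • 1 - c := by
    have e1 : ((1 - ε : ℝ)) • (1 : H →L[ℂ] H) = ((1 - ε : ℝ) : ℂ) • 1 := by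
      rw [← Complex.coe_algebraMap, algebraMap_smul]
    rw [map_sub, e1, map_smul, hEN2 1 hN1, ← e1, ← hc]
  have hcle : (0 : H →L[ℂ] H) ≤ (1 - ε) • 1 - c := by
    rw [ContinuousLinearMap.nonneg_iff_isPositive, ← hENsm]
    apply hEN5 _ (sub_mem hsmem hhM)
    rw [← ContinuousLinearMap.nonneg_iff_isPositive]
    exact hφ1'
  set u : H →L[ℂ] H := 1 - c with hu
  have hεu : ε • (1 : H →L[ℂ] H) ≤ u := by
    have := sub_le_sub_left (sub_nonneg.mp hcle) (1 : H →L[ℂ] H)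
    calc ε • (1 : H →L[ℂ] H) = 1 - (1 - ε) • 1 := hsm.symm
      _ ≤ 1 - c := this
  have hu0 : (0 : H →L[ℂ] H) ≤ u := le_trans hε1 hεu
  have hu_sa : IsSelfAdjoint u := .of_nonneg hu0
  have hspec : ∀ r ∈ spectrum ℝ u, ε ≤ r := by
    apply (algebraMap_le_iff_le_spectrum hu_sa).mp
    rw [Algebra.algebraMap_eq_smul_one]
    exact hεu
  have hspos : ∀ r ∈ spectrum ℝ u, 0 < r := fun r hr => lt_of_lt_of_le hε (hspec r hr)
  have hcont_inv : ContinuousOn (fun r : ℝ => r⁻¹) (spectrum ℝ u) :=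
    ContinuousOn.inv₀ continuousOn_id fun r hr => (hspos r hr).ne'
  have hcont_sqi : ContinuousOn (fun r : ℝ => Real.sqrt r⁻¹) (spectrum ℝ u) :=
    Real.continuous_sqrt.comp_continuousOn hcont_inv
  set v : H →L[ℂ] H := cfc (fun r : ℝ => r⁻¹) u with hv
  set s : H →L[ℂ] H := cfc (fun r : ℝ => Real.sqrt r⁻¹) u with hsdef
  have huv : u * v = 1 := by
    calc u * v = cfc (id : ℝ → ℝ) u * cfc (fun r : ℝ => r⁻¹) u := by rw [cfc_id ℝ u]
      _ = cfc (fun r : ℝ => r * r⁻¹) u := (cfc_mul _ _ u continuousOn_id hcont_inv).symm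
      _ = cfc (fun _ : ℝ => (1 : ℝ)) u := cfc_congr fun r hr => mul_inv_cancel₀ (hspos r hr).ne'
      _ = 1 := by rw [cfc_const 1 u, map_one]
  have hvu : v * u = 1 := by
    calc v * u = cfc (fun r : ℝ => r⁻¹) u * cfc (id : ℝ → ℝ) u := by rw [cfc_id ℝ u]
      _ = cfc (fun r : ℝ => r⁻¹ * r) u := (cfc_mul _ _ u hcont_inv continuousOn_id).symm
      _ = cfc (fun _ : ℝ => (1 : ℝ)) u := cfc_congr fun r hr => inv_mul_cancel₀ (hspos r hr).ne'
      _ = 1 := by rw [cfc_const 1 u, map_one]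
  have hss : s * s = v := by
    calc s * s = cfc (fun r : ℝ => Real.sqrt r⁻¹ * Real.sqrt r⁻¹) u :=
          (cfc_mul _ _ u hcont_sqi hcont_sqi).symm
      _ = cfc (fun r : ℝ => r⁻¹) u := cfc_congr fun r hr =>
          Real.mul_self_sqrt (inv_nonneg.mpr (hspos r hr).le)
  have hs_sa : IsSelfAdjoint s := cfc_predicate _ u
  have hv0 : (0 : H →L[ℂ] H) ≤ v :=
    cfc_nonneg fun r hr => inv_nonneg.mpr (hspos r hr).le
  -- membership via double commutant
  have memM_of : ∀ x : H →L[ℂ] H,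
      (∀ y ∈ Set.centralizer (M : Set (H →L[ℂ] H)), Commute y x) → x ∈ M := by
    intro x hx
    rw [← SetLike.mem_coe, ← M.centralizer_centralizer]
    exact Set.mem_centralizer_iff.mpr fun g hg => hx g hg
  have memN_of : ∀ x : H →L[ℂ] H,
      (∀ y ∈ Set.centralizer (N : Set (H →L[ℂ] H)), Commute y x) → x ∈ N := by
    intro x hx
    rw [← SetLike.mem_coe, ← N.centralizer_centralizer]
    exact Set.mem_centralizer_iff.mpr fun g hg => hx g hg
  have hcomm_u : ∀ y : H →L[ℂ] H, Commute y c → Commute y u := by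
    intro y hyc
    exact (Commute.one_right y).sub_right hyc
  have hvN : v ∈ N := by
    apply memN_of
    intro y hy
    exact commute_cfc_aux hu_sa (hcomm_u y (show Commute c y from hy c hcN).symm) _
  have hvM : v ∈ M := hNM hvN
  have hvNcomm : ∀ y ∈ N, Commute y v := fun y hy =>
    commute_cfc_aux hu_sa (hcomm_u y (hcZ y hy)) _
  -- k ≤ 1
  have hk_sa : IsSelfAdjoint k := hkpos.isSelfAdjoint
  set m : H →L[ℂ] H := k - 1 with hm
  have hm_sa : IsSelfAdjoint m := hk_sa.sub (IsSelfAdjoint.one _)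
  have hmM : m ∈ M := sub_mem hkM hM1
  set p : H →L[ℂ] H := cfc (fun r : ℝ => max r 0) m with hp
  set n : H →L[ℂ] H := cfc (fun r : ℝ => max (-r) 0) m with hn
  have hcontp : ContinuousOn (fun r : ℝ => max r 0) (spectrum ℝ m) :=
    (continuous_id.max continuous_const).continuousOn
  have hcontn : ContinuousOn (fun r : ℝ => max (-r) 0) (spectrum ℝ m) :=
    (continuous_neg.max continuous_const).continuousOn
  have hp0 : (0 : H →L[ℂ] H) ≤ p := cfc_nonneg fun r _ => le_max_right r 0
  have hn0 : (0 : H →L[ℂ] H) ≤ n := cfc_nonneg fun r _ => le_max_right (-r) 0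
  have hpn : p - n = m := by
    calc p - n = cfc (fun r : ℝ => max r 0 - max (-r) 0) m :=
          (cfc_sub _ _ m hcontp hcontn).symm
      _ = cfc (id : ℝ → ℝ) m := cfc_congr fun r _ => max_zero_sub_max_neg_zero_eq_self r
      _ = m := cfc_id ℝ m
  have hpnz : p * n = 0 := by
    calc p * n = cfc (fun r : ℝ => max r 0 * max (-r) 0) m :=
          (cfc_mul _ _ m hcontp hcontn).symm
      _ = cfc (fun _ : ℝ => (0 : ℝ)) m := cfc_congr (by
          intro r _
          rcases le_total r 0 with hr | hr
          · simp [max_eq_right hr]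
          · simp [max_eq_right (neg_nonpos.mpr hr)])
      _ = 0 := by rw [cfc_const 0 m, map_zero]
  have hpM : p ∈ M := by
    apply memM_of
    intro y hy
    exact commute_cfc_aux hm_sa ((show Commute k y from hy k hkM).symm.sub_right
      (Commute.one_right y)) _
  have hp_sa : IsSelfAdjoint p := .of_nonneg hp0
  have hppz : tr.τ (p * p) = 0 := by
    have hτp : tr.τ (p * k) ≤ tr.τ p := by
      rw [← hkRN p hpM]
      exact hsub p hpM ((ContinuousLinearMap.nonneg_iff_isPositive p).mp hp0)
    have hpm : p * m = p * p := by
      rw [← hpn, mul_sub, hpnz, sub_zero]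
    have h1 : tr.τ (p * p) = tr.τ (p * k) - tr.τ p := by
      rw [← hpm, hm, mul_sub, mul_one, map_sub]
    have h2 : tr.τ (p * p) ≤ 0 := by rw [h1]; exact sub_nonpos.mpr hτp
    have h3 : (0 : ℂ) ≤ tr.τ (star p * p) := tr.pos p hpM
    rw [hp_sa.star_eq] at h3
    exact le_antisymm h2 h3
  have hpz : p = 0 := by
    apply tr.faithful p hpM
    rw [hp_sa.star_eq]
    exact hppz
  have h1k : (0 : H →L[ℂ] H) ≤ 1 - k := by
    have hmn : -n = m := by rw [← hpn, hpz, zero_sub]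
    have : (1 : H →L[ℂ] H) - k = n := by
      rw [show (1 : H →L[ℂ] H) - k = -m by rw [hm]; abel, ← hmn, neg_neg]
    rw [this]
    exact hn0
  -- commuting facts for s and (1 - k)
  have h1ku : Commute ((1 : H →L[ℂ] H) - k) u :=
    Commute.sub_left (Commute.one_left u) (hcomm_u k (hkN c hcN).symm)
  have hcom_s : Commute ((1 : H →L[ℂ] H) - k) s := commute_cfc_aux hu_sa h1ku _
  -- the candidates
  refine ⟨1 - h, v * (1 - k), ?_, ?_, ⟨sub_mem hM1 hhM, ?_⟩, ⟨mul_mem hvM (sub_mem hM1 hkM), ?_⟩,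
    ?_, ?_⟩
  · exact (ContinuousLinearMap.nonneg_iff_isPositive _).mp h1hpos
  · rw [← ContinuousLinearMap.nonneg_iff_isPositive]
    have he : v * (1 - k) = star s * (1 - k) * s := by
      rw [hs_sa.star_eq]
      calc v * (1 - k) = s * s * (1 - k) := by rw [hss]
        _ = s * ((1 : H →L[ℂ] H) - k) * s := by
            rw [mul_assoc, mul_assoc, hcom_s.symm.eq]
    rw [he]
    exact star_left_conjugate_nonneg h1k s
  · intro y hy
    exact (Commute.one_right y).sub_right (hhN y hy)
  · intro y hy
    exact (hvNcomm y hy).mul_right ((Commute.one_right y).sub_right (hkN y hy))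
  · -- 1 - h = (1 - h) * EN (v * (1 - k))
    have hENb : EN (v * (1 - k)) = 1 := by
      have e1 : EN (v * (1 - k) * 1) = v * EN (1 - k) * 1 :=
        hEN3 v hvN 1 hN1 (1 - k) (sub_mem hM1 hkM)
      simp only [mul_one] at e1
      have e2 : EN ((1 : H →L[ℂ] H) - k) = u := by
        rw [map_sub, hEN2 1 hN1, hENk, hu]
      rw [e1, e2, hvu]
    rw [hENb, mul_one]
  · -- 1 - k = EN (1 - h) * (v * (1 - k))
    have hENa : EN (1 - h) = u := by
      rw [map_sub, hEN2 1 hN1, ← hc, hu]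
    rw [hENa, ← mul_assoc, huv, one_mul]
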